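/- arXiv:2406.07132 — 2 statements merged into one kernel-verified Lean document; each statement's English description precedes it below -/
import Mathlib

section
/- Let $k$ and $n$ be positive integers with $n \geq k+2$. The signless Laplacian spectral radius of the graph $K_1 \vee (K_{n-k-2} \cup (k+1)K_1)$ equals $\theta(k,n)$, the largest real root of $x^{3}-(3n-2k-5)x^{2}+n(2n-2k-5)x-2(n-k-3)(n-k-2)=0$. -/
/-- The signless Laplacian matrix `Q(G) = D(G) + A(G)` of a simple graph, over `ℝ`. -/
noncomputable def signlessLap {V : Type*} [Fintype V] [DecidableEq V] (G : SimpleGraph V) :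
    Matrix V V ℝ :=
  letI : DecidableRel G.Adj := Classical.decRel _
  G.degMatrix ℝ + G.adjMatrix ℝ

/-- The signless Laplacian spectral radius `q(G)`: the largest eigenvalue of `Q(G)`. -/
noncomputable def qRadius {V : Type*} [Fintype V] [DecidableEq V] (G : SimpleGraph V) : ℝ :=
  sSup (spectrum ℝ (signlessLap G))

/-- `G` has a spanning tree whose leaf degree is at most `k`, i.e. a spanning tree `T`
in which every vertex is adjacent (in `T`) to at most `k` leaves of `T`. -/
def HasSpanningTreeWithLeafDegLE {V : Type*} (G : SimpleGraph V) (k : ℕ) : Prop :=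
  ∃ T : SimpleGraph V, T ≤ G ∧ T.IsTree ∧
    ∀ v : V, {u : V | T.Adj v u ∧ (T.neighborSet u).ncard = 1}.ncard ≤ k

/-- The join `G ∨ H` of two vertex-disjoint graphs: all edges between the two parts. -/
def SimpleGraph.graphJoin {α β : Type*} (G : SimpleGraph α) (H : SimpleGraph β) :
    SimpleGraph (α ⊕ β) where
  Adj x y :=
    match x, y with
    | Sum.inl a, Sum.inl b => G.Adj a b
    | Sum.inr a, Sum.inr b => H.Adj a b
    | Sum.inl _, Sum.inr _ => True
    | Sum.inr _, Sum.inl _ => True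
  symm := by constructor; rintro (a | a) (b | b) h <;> first | trivial | exact G.adj_symm h | exact H.adj_symm h
  loopless := by constructor; rintro (a | a) h <;> first | exact G.loopless.irrefl _ h | exact H.loopless.irrefl _ h

/-- The disjoint union `G ∪ H` of two vertex-disjoint graphs. -/
def SimpleGraph.graphDisjUnion {α β : Type*} (G : SimpleGraph α) (H : SimpleGraph β) :
    SimpleGraph (α ⊕ β) where
  Adj x y :=
    match x, y with
    | Sum.inl a, Sum.inl b => G.Adj a b
    | Sum.inr a, Sum.inr b => H.Adj a b
    | _, _ => False
  symm := by constructor; rintro (a | a) (b | b) h <;> first | trivial | exact G.adj_symm h | exact H.adj_symm h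
  loopless := by constructor; rintro (a | a) h <;> first | exact G.loopless.irrefl _ h | exact H.loopless.irrefl _ h

open Matrix Finset Polynomial
private lemma signlessLap_apply' {V : Type*} [Fintype V] [DecidableEq V] (G : SimpleGraph V)
    [inst : DecidableRel G.Adj] (i j : V) :
    signlessLap G i j = (if i = j then (G.degree i : ℝ) else 0) + (if G.Adj i j then 1 else 0) := by
  unfold signlessLap
  rw [show (Classical.decRel G.Adj : DecidableRel G.Adj) = inst from Subsingleton.elim _ _]
  simp [SimpleGraph.degMatrix, Matrix.diagonal_apply]

private lemma signlessLap_symm' {V : Type*} [Fintype V] [DecidableEq V] (G : SimpleGraph V)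
    (i j : V) : signlessLap G i j = signlessLap G j i := by
  classical
  rw [signlessLap_apply', signlessLap_apply']
  congr 1
  · rcases eq_or_ne i j with h | h
    · subst h; rfl
    · simp [h, Ne.symm h]
  · simp [G.adj_comm]

private lemma signlessLap_nonneg' {V : Type*} [Fintype V] [DecidableEq V] (G : SimpleGraph V)
    (i j : V) : 0 ≤ signlessLap G i j := by
  classical
  rw [signlessLap_apply']
  positivity

private lemma signlessLap_mulVec_apply' {V : Type*} [Fintype V] [DecidableEq V]
    (G : SimpleGraph V) [inst : DecidableRel G.Adj] (v : V → ℝ) (x : V) :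
    (signlessLap G *ᵥ v) x
      = (∑ j, if G.Adj x j then (1:ℝ) else 0) * v x + ∑ j, if G.Adj x j then v j else 0 := by
  have hdeg : (G.degree x : ℝ) = ∑ j, if G.Adj x j then (1:ℝ) else 0 := by
    rw [SimpleGraph.degree, SimpleGraph.neighborFinset_eq_filter, Finset.card_filter]
    push_cast
    exact Finset.sum_congr rfl fun j _ => by split_ifs <;> simp
  simp only [Matrix.mulVec, dotProduct, signlessLap_apply', add_mul, ite_mul, zero_mul,
    one_mul, Finset.sum_add_distrib]
  rw [Finset.sum_ite_eq Finset.univ x (fun j => (G.degree x : ℝ) * v j)]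
  simp [hdeg, Finset.sum_mul]

private lemma mem_spectrum_of_eigen' {V : Type*} [Fintype V] [DecidableEq V]
    (M : Matrix V V ℝ) (μ : ℝ) (w : V → ℝ) (hw : w ≠ 0) (h : M *ᵥ w = μ • w) :
    μ ∈ spectrum ℝ M := by
  rw [spectrum.mem_iff]
  intro hu
  rw [Matrix.isUnit_iff_isUnit_det] at hu
  have hdet : (algebraMap ℝ (Matrix V V ℝ) μ - M).det = 0 := by
    rw [← Matrix.exists_mulVec_eq_zero_iff]
    refine ⟨w, hw, ?_⟩
    rw [Matrix.sub_mulVec, Algebra.algebraMap_eq_smul_one, Matrix.smul_mulVec,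
      Matrix.one_mulVec, h, sub_self]
  rw [hdet] at hu
  exact hu.ne_zero rfl

private lemma eigen_of_mem_spectrum' {V : Type*} [Fintype V] [DecidableEq V]
    (M : Matrix V V ℝ) (μ : ℝ) (h : μ ∈ spectrum ℝ M) :
    ∃ w : V → ℝ, w ≠ 0 ∧ M *ᵥ w = μ • w := by
  rw [spectrum.mem_iff, Matrix.isUnit_iff_isUnit_det, isUnit_iff_ne_zero, not_not] at h
  rw [← Matrix.exists_mulVec_eq_zero_iff] at h
  obtain ⟨w, hw, hmul⟩ := h
  refine ⟨w, hw, ?_⟩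
  rw [Matrix.sub_mulVec, Algebra.algebraMap_eq_smul_one, Matrix.smul_mulVec,
    Matrix.one_mulVec, sub_eq_zero] at hmul
  exact hmul.symm

private lemma spectrum_le_of_perron' {V : Type*} [Fintype V] [DecidableEq V]
    (M : Matrix V V ℝ) (hsym : ∀ i j, M i j = M j i) (hpos : ∀ i j, 0 ≤ M i j)
    (v : V → ℝ) (hv : ∀ i, 0 < v i) (θ : ℝ) (hθv : M *ᵥ v = θ • v) :
    ∀ μ ∈ spectrum ℝ M, μ ≤ θ := by
  intro μ hμ
  obtain ⟨w, hw, hmul⟩ := eigen_of_mem_spectrum' M μ hμ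
  set u : V → ℝ := fun i => |w i| with hu
  have key : ∀ i, |μ| * u i ≤ ∑ j, M i j * u j := by
    intro i
    have h1 : |μ| * u i = |(M *ᵥ w) i| := by
      rw [hmul]; simp [abs_mul, hu]
    rw [h1, Matrix.mulVec, dotProduct]
    calc |∑ j, M i j * w j| ≤ ∑ j, |M i j * w j| := Finset.abs_sum_le_sum_abs _ _
    _ = ∑ j, M i j * u j := by
        refine Finset.sum_congr rfl fun j _ => ?_
        rw [abs_mul, abs_of_nonneg (hpos i j)]
  have hvu : 0 < ∑ i, v i * u i := by
    obtain ⟨i0, hi0⟩ := Function.ne_iff.mp hw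
    refine Finset.sum_pos' (fun i _ => mul_nonneg (hv i).le (abs_nonneg _))
      ⟨i0, Finset.mem_univ _, mul_pos (hv i0) (abs_pos.mpr hi0)⟩
  have hsum : |μ| * ∑ i, v i * u i ≤ θ * ∑ i, v i * u i := by
    calc |μ| * ∑ i, v i * u i = ∑ i, v i * (|μ| * u i) := by
          rw [Finset.mul_sum]; exact Finset.sum_congr rfl fun i _ => by ring
    _ ≤ ∑ i, v i * (∑ j, M i j * u j) :=
        Finset.sum_le_sum fun i _ => mul_le_mul_of_nonneg_left (key i) (hv i).le
    _ = ∑ j, (∑ i, M j i * v i) * u j := by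
        simp_rw [Finset.mul_sum, Finset.sum_mul]
        rw [Finset.sum_comm]
        exact Finset.sum_congr rfl fun j _ => Finset.sum_congr rfl fun i _ => by
          rw [hsym i j]; ring
    _ = ∑ j, θ * v j * u j := by
        refine Finset.sum_congr rfl fun j _ => ?_
        have : (M *ᵥ v) j = θ * v j := by rw [hθv]; simp
        rw [← this]; rfl
    _ = θ * ∑ i, v i * u i := by
        rw [Finset.mul_sum]; exact Finset.sum_congr rfl fun i _ => by ring
  have := le_of_mul_le_mul_right (by simpa [mul_comm] using hsum) hvu
  exact (le_abs_self μ).trans this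

private lemma qRadius_eq_of_perron' {V : Type*} [Fintype V] [DecidableEq V] [Nonempty V]
    (G : SimpleGraph V) (v : V → ℝ) (hv : ∀ i, 0 < v i) (θ : ℝ)
    (h : signlessLap G *ᵥ v = θ • v) : qRadius G = θ := by
  have hub := spectrum_le_of_perron' _ (signlessLap_symm' G) (signlessLap_nonneg' G) v hv θ h
  have hvne : v ≠ 0 := by
    intro h0
    have := congrFun h0 (Classical.arbitrary V)
    simp only [Pi.zero_apply] at this
    exact (hv _).ne' this
  have hmem := mem_spectrum_of_eigen' (signlessLap G) θ v hvne h
  exact le_antisymm (csSup_le ⟨θ, hmem⟩ hub) (le_csSup ⟨θ, fun μ hμ => hub μ hμ⟩ hmem)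

private lemma cubic_finite' (A B C : ℝ) : {x : ℝ | x^3 + A*x^2 + B*x + C = 0}.Finite := by
  have hP : (Polynomial.X^3 + Polynomial.C A * Polynomial.X^2 + Polynomial.C B * Polynomial.X
      + Polynomial.C C : Polynomial ℝ) ≠ 0 := by
    intro h
    have := congrArg (fun p => Polynomial.coeff p 3) h
    simp [Polynomial.coeff_X_pow, Polynomial.coeff_C] at this
  have := Polynomial.finite_setOf_isRoot hP
  convert this using 1
  ext x
  simp [Polynomial.IsRoot]

private lemma cubic_root_ge' (A B C t : ℝ) (h : t^3 + A*t^2 + B*t + C ≤ 0) :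
    ∃ x, (x^3 + A*x^2 + B*x + C = 0) ∧ t ≤ x := by
  set f : ℝ → ℝ := fun x => x^3 + A*x^2 + B*x + C with hf
  set T : ℝ := max t (max 1 (1 + |A| + |B| + |C|)) with hT
  have hT1 : (1:ℝ) ≤ T := le_trans (le_max_left _ _) (le_max_right _ _)
  have hT2 : 1 + |A| + |B| + |C| ≤ T := le_trans (le_max_right _ _) (le_max_right _ _)
  have htT : t ≤ T := le_max_left _ _
  have hfT : 0 ≤ f T := by
    show (0:ℝ) ≤ T^3 + A*T^2 + B*T + C
    have hA := neg_abs_le A; have hB := neg_abs_le B; have hC := neg_abs_le C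
    have h0 : (0:ℝ) ≤ T := le_trans zero_le_one hT1
    have h1 : T ≤ T^2 := by nlinarith
    have h1' : (1:ℝ) ≤ T^2 := by nlinarith
    nlinarith [mul_le_mul_of_nonneg_right hT2 (sq_nonneg T),
      mul_le_mul_of_nonneg_right hA (sq_nonneg T),
      mul_le_mul_of_nonneg_right hB h0,
      mul_le_mul_of_nonneg_left h1 (abs_nonneg B),
      mul_le_mul_of_nonneg_left h1' (abs_nonneg C), sq_nonneg T]
  have hcont : ContinuousOn f (Set.Icc t T) := by fun_prop
  obtain ⟨x, hx, hfx⟩ := intermediate_value_Icc htT hcont ⟨h, hfT⟩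
  exact ⟨x, hfx, hx.1⟩
private lemma sum_ite_ne' {m : ℕ} (i : Fin m) (z : ℝ) :
    ∑ j : Fin m, (if i = j then 0 else z) = m * z - z := by
  have h : ∀ j : Fin m, (if i = j then (0:ℝ) else z) = z - (if i = j then z else 0) := by
    intro j; split_ifs <;> ring
  simp only [h, Finset.sum_sub_distrib, Finset.sum_const, Finset.card_univ, Fintype.card_fin,
    Finset.sum_ite_eq, Finset.mem_univ, if_true, nsmul_eq_mul]

private lemma sum_ite_aux {m : ℕ} (i : Fin m) (D : ∀ j : Fin m, Decidable (i = j)) (z w : ℝ) :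
    (∑ j : Fin m, @ite ℝ (i = j) (D j) z w) = w * m + z - w := by
  rw [← Finset.sum_erase_add _ _ (Finset.mem_univ i), if_pos rfl,
    Finset.sum_congr rfl (fun j hj => if_neg (Ne.symm (Finset.ne_of_mem_erase hj)))]
  rw [Finset.sum_const, Finset.card_erase_of_mem (Finset.mem_univ i), Finset.card_univ,
    Fintype.card_fin, nsmul_eq_mul]
  have h1 : 1 ≤ m := i.pos
  push_cast [Nat.cast_sub h1]
  ring

private lemma sum_ite_aux' {m : ℕ} (i : Fin m) (D : ∀ j : Fin m, Decidable (i ≠ j)) (z w : ℝ) :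
    (∑ j : Fin m, @ite ℝ (i ≠ j) (D j) z w) = z * m + w - z := by
  rw [← Finset.sum_erase_add _ _ (Finset.mem_univ i), if_neg (fun h => h rfl),
    Finset.sum_congr rfl (fun j hj => if_pos (Ne.symm (Finset.ne_of_mem_erase hj)))]
  rw [Finset.sum_const, Finset.card_erase_of_mem (Finset.mem_univ i), Finset.card_univ,
    Fintype.card_fin, nsmul_eq_mul]
  have h1 : 1 ≤ m := i.pos
  push_cast [Nat.cast_sub h1]
  ring

/-- The signless Laplacian spectral radius of `K₁ ∨ (K_(n-k-2) ∪ (k+1)K₁)` is the largest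
real root of `x³-(3n-2k-5)x²+n(2n-2k-5)x-2(n-k-3)(n-k-2) = 0`. -/
theorem qRadius_extremal_graph_eq_largest_root (k n : ℕ) (hk : 1 ≤ k) (hnk : k + 2 ≤ n) :
    ((qRadius ((⊤ : SimpleGraph (Fin 1)).graphJoin ((⊤ : SimpleGraph (Fin (n - k - 2))).graphDisjUnion (⊥ : SimpleGraph (Fin (k + 1)))))) ^ 3 - (3 * (n : ℝ) - 2 * k - 5) * (qRadius ((⊤ : SimpleGraph (Fin 1)).graphJoin ((⊤ : SimpleGraph (Fin (n - k - 2))).graphDisjUnion (⊥ : SimpleGraph (Fin (k + 1)))))) ^ 2 + (n : ℝ) * (2 * (n : ℝ) - 2 * k - 5) * (qRadius ((⊤ : SimpleGraph (Fin 1)).graphJoin ((⊤ : SimpleGraph (Fin (n - k - 2))).graphDisjUnion (⊥ : SimpleGraph (Fin (k + 1)))))) - 2 * ((n : ℝ) - k - 3) * ((n : ℝ) - k - 2)) = 0 ∧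
      ∀ x : ℝ, x ^ 3 - (3 * (n : ℝ) - 2 * k - 5) * x ^ 2 + (n : ℝ) * (2 * (n : ℝ) - 2 * k - 5) * x - 2 * ((n : ℝ) - k - 3) * ((n : ℝ) - k - 2) = 0 →
        x ≤ qRadius ((⊤ : SimpleGraph (Fin 1)).graphJoin
      ((⊤ : SimpleGraph (Fin (n - k - 2))).graphDisjUnion (⊥ : SimpleGraph (Fin (k + 1))))) := by
  classical
  set mm : ℕ := n - k - 2 with hmm
  have hn : n = mm + k + 2 := by omega
  have hNcast : (n:ℝ) = (mm:ℝ) + (k:ℝ) + 2 := by rw [hn]; push_cast; ring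
  set A : ℝ := -(3*(n:ℝ) - 2*(k:ℝ) - 5) with hA
  set B : ℝ := (n:ℝ)*(2*(n:ℝ)-2*(k:ℝ)-5) with hB
  set C : ℝ := -(2*((n:ℝ)-(k:ℝ)-3)*((n:ℝ)-(k:ℝ)-2)) with hC
  have hfin := cubic_finite' A B C
  have hMM : (0:ℝ) ≤ (mm:ℝ) * ((mm:ℝ) - 1) := by
    rcases Nat.eq_zero_or_pos mm with h | h
    · simp [h]
    · have h1 : (1:ℝ) ≤ (mm:ℝ) := by exact_mod_cast h
      nlinarith
  have hpn : (n:ℝ)^3 + A*(n:ℝ)^2 + B*(n:ℝ) + C ≤ 0 := by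
    have heq : (n:ℝ)^3 + A*(n:ℝ)^2 + B*(n:ℝ) + C = -2*((mm:ℝ)*((mm:ℝ)-1)) := by
      rw [hA, hB, hC, hNcast]; ring
    rw [heq]; linarith
  obtain ⟨x0, hx0S, hx0⟩ := cubic_root_ge' A B C (n:ℝ) hpn
  set S : Set ℝ := {x | x^3 + A*x^2 + B*x + C = 0} with hS
  have hSne : S.Nonempty := ⟨x0, hx0S⟩
  set θ : ℝ := sSup S with hθdef
  have hθS : θ ∈ S := hSne.csSup_mem hfin
  have hub : ∀ x ∈ S, x ≤ θ := fun x hx => le_csSup hfin.bddAbove hx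
  have hθN : (n:ℝ) ≤ θ := le_trans hx0 (hub _ hx0S)
  have hn3 : (3:ℝ) ≤ (n:ℝ) := by exact_mod_cast (by omega : 3 ≤ n)
  have hθ1 : 1 < θ := by linarith
  have hθ2m : 2*(mm:ℝ) - 1 < θ := by
    rcases lt_or_ge mm 2 with h | h
    · have h1 : (mm:ℝ) ≤ 1 := by exact_mod_cast (by omega : mm ≤ 1)
      linarith
    · have h2 : (2:ℝ) ≤ (mm:ℝ) := by exact_mod_cast h
      have hneg : (2*(mm:ℝ)-1)^3 + A*(2*(mm:ℝ)-1)^2 + B*(2*(mm:ℝ)-1) + C < 0 := by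
        have heq : (2*(mm:ℝ)-1)^3 + A*(2*(mm:ℝ)-1)^2 + B*(2*(mm:ℝ)-1) + C
            = -2*((mm:ℝ)*((mm:ℝ)-1)) := by
          rw [hA, hB, hC, hNcast]; ring
        rw [heq]; nlinarith
      obtain ⟨x1, hx1S, hx1⟩ := cubic_root_ge' A B C _ hneg.le
      have hne1 : 2*(mm:ℝ)-1 ≠ x1 := by
        rintro rfl
        rw [hx1S] at hneg
        exact lt_irrefl _ hneg
      exact lt_of_lt_of_le (lt_of_le_of_ne hx1 hne1) (hub _ hx1S)
  have hpθ : θ^3 + A*θ^2 + B*θ + C = 0 := hθS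
  set bb : ℝ := (θ - (2*(mm:ℝ)-1))⁻¹ with hbbdef
  set cc : ℝ := (θ - 1)⁻¹ with hccdef
  have hbne : θ - (2*(mm:ℝ)-1) ≠ 0 := ne_of_gt (by linarith)
  have hcne : θ - 1 ≠ 0 := ne_of_gt (by linarith)
  have hbbpos : 0 < bb := inv_pos.mpr (by linarith)
  have hccpos : 0 < cc := inv_pos.mpr (by linarith)
  rw [hA, hB, hC, hNcast] at hpθ
  set Gg : SimpleGraph (Fin 1 ⊕ (Fin mm ⊕ Fin (k+1))) :=
    (⊤ : SimpleGraph (Fin 1)).graphJoin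
      ((⊤ : SimpleGraph (Fin mm)).graphDisjUnion (⊥ : SimpleGraph (Fin (k+1)))) with hGg
  set v : (Fin 1 ⊕ (Fin mm ⊕ Fin (k+1))) → ℝ :=
    Sum.elim (fun _ => 1) (Sum.elim (fun _ => bb) (fun _ => cc)) with hvdef
  have hvpos : ∀ i, 0 < v i := by
    rintro (a | i | s)
    · exact one_pos
    · exact hbbpos
    · exact hccpos
  have heig : signlessLap Gg *ᵥ v = θ • v := by
    funext x
    rw [signlessLap_mulVec_apply']
    rcases x with a | i | s
    · have ha1 : ∀ z : ℝ, (∑ b : Fin 1, if Gg.Adj (Sum.inl a) (Sum.inl b) then z else 0) = 0 := by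
        intro z
        rw [Finset.sum_congr rfl (fun b _ => if_neg (show ¬ Gg.Adj (Sum.inl a) (Sum.inl b) from fun h => h (Subsingleton.elim a b)))]
        simp
      have ha2 : ∀ z : ℝ, (∑ j : Fin mm,
          if Gg.Adj (Sum.inl a) (Sum.inr (Sum.inl j)) then z else 0) = mm * z := by
        intro z
        rw [Finset.sum_congr rfl (fun j _ => if_pos
          (show Gg.Adj (Sum.inl a) (Sum.inr (Sum.inl j)) from True.intro)), Finset.sum_const,
          nsmul_eq_mul, Finset.card_univ, Fintype.card_fin]
      have ha3 : ∀ z : ℝ, (∑ t : Fin (k+1),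
          if Gg.Adj (Sum.inl a) (Sum.inr (Sum.inr t)) then z else 0) = ((k:ℝ)+1) * z := by
        intro z
        rw [Finset.sum_congr rfl (fun t _ => if_pos
          (show Gg.Adj (Sum.inl a) (Sum.inr (Sum.inr t)) from True.intro)), Finset.sum_const,
          nsmul_eq_mul, Finset.card_univ, Fintype.card_fin]
        push_cast
        ring
      simp only [Fintype.sum_sum_type, Sum.elim_inl, Sum.elim_inr, Pi.smul_apply, smul_eq_mul,
        hvdef, ha1, ha2, ha3]
      have hX : bb * (θ - (2*(mm:ℝ)-1)) = 1 := by rw [hbbdef]; exact inv_mul_cancel₀ hbne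
      have hY : cc * (θ - 1) = 1 := by rw [hccdef]; exact inv_mul_cancel₀ hcne
      linear_combination (-((mm:ℝ)+k+1+mm*bb+(k+1)*cc-θ) + bb*cc*mm*(θ-1)) * hX
        + (-((mm:ℝ)+k+1+mm*bb+(k+1)*cc-θ)*bb*(θ-(2*mm-1)) + bb*cc*(k+1)*(θ-(2*mm-1))) * hY
        + (-1 : ℝ) * bb * cc * hpθ
    · have hb1 : ∀ z : ℝ, (∑ b : Fin 1,
          if Gg.Adj (Sum.inr (Sum.inl i)) (Sum.inl b) then z else 0) = z := by
        intro z
        rw [Finset.sum_congr rfl (fun b _ => if_pos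
          (show Gg.Adj (Sum.inr (Sum.inl i)) (Sum.inl b) from True.intro)), Finset.sum_const]
        simp
      have hb2 : ∀ z : ℝ, (∑ j : Fin mm,
          if Gg.Adj (Sum.inr (Sum.inl i)) (Sum.inr (Sum.inl j)) then z else 0)
          = (mm:ℝ) * z - z := by
        intro z
        rw [Finset.sum_congr rfl (fun j _ =>
          (show (if Gg.Adj (Sum.inr (Sum.inl i)) (Sum.inr (Sum.inl j)) then z else 0)
              = if i = j then 0 else z by
            by_cases h : i = j
            · rw [if_neg (show ¬ Gg.Adj (Sum.inr (Sum.inl i)) (Sum.inr (Sum.inl j))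
                  from fun hadj => hadj h), if_pos h]
            · rw [if_pos (show Gg.Adj (Sum.inr (Sum.inl i)) (Sum.inr (Sum.inl j)) from h),
                  if_neg h]))]
        exact sum_ite_ne' i z
      have hb3 : ∀ z : ℝ, (∑ t : Fin (k+1),
          if Gg.Adj (Sum.inr (Sum.inl i)) (Sum.inr (Sum.inr t)) then z else 0) = 0 := by
        intro z
        rw [Finset.sum_congr rfl (fun t _ => if_neg
          (show ¬ Gg.Adj (Sum.inr (Sum.inl i)) (Sum.inr (Sum.inr t)) from fun h => h))]
        simp
      simp only [Fintype.sum_sum_type, Sum.elim_inl, Sum.elim_inr, Pi.smul_apply, smul_eq_mul,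
        hvdef, hb1, hb2, hb3]
      have hX : bb * (θ - (2*(mm:ℝ)-1)) = 1 := by rw [hbbdef]; exact inv_mul_cancel₀ hbne
      linear_combination (-1 : ℝ) * hX
    · have hc1 : ∀ z : ℝ, (∑ b : Fin 1,
          if Gg.Adj (Sum.inr (Sum.inr s)) (Sum.inl b) then z else 0) = z := by
        intro z
        rw [Finset.sum_congr rfl (fun b _ => if_pos
          (show Gg.Adj (Sum.inr (Sum.inr s)) (Sum.inl b) from True.intro)), Finset.sum_const]
        simp
      have hc2 : ∀ z : ℝ, (∑ j : Fin mm,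
          if Gg.Adj (Sum.inr (Sum.inr s)) (Sum.inr (Sum.inl j)) then z else 0) = 0 := by
        intro z
        rw [Finset.sum_congr rfl (fun j _ => if_neg
          (show ¬ Gg.Adj (Sum.inr (Sum.inr s)) (Sum.inr (Sum.inl j)) from fun h => h))]
        simp
      have hc3 : ∀ z : ℝ, (∑ t : Fin (k+1),
          if Gg.Adj (Sum.inr (Sum.inr s)) (Sum.inr (Sum.inr t)) then z else 0) = 0 := by
        intro z
        rw [Finset.sum_congr rfl (fun t _ => if_neg
          (show ¬ Gg.Adj (Sum.inr (Sum.inr s)) (Sum.inr (Sum.inr t)) from fun h => h))]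
        simp
      simp only [Fintype.sum_sum_type, Sum.elim_inl, Sum.elim_inr, Pi.smul_apply, smul_eq_mul,
        hvdef, hc1, hc2, hc3]
      rw [hccdef]
      field_simp
      ring
  have hq := qRadius_eq_of_perron' Gg v hvpos θ heig
  constructor
  · rw [hq, hB, hNcast]
    linear_combination hpθ
  · intro x hx
    rw [hq]
    refine hub x ?_
    show x^3 + A*x^2 + B*x + C = 0
    rw [hA, hB, hC]
    linear_combination hx
end

section
/- The signless Laplacian spectral radius of the graph $K_2 \vee 8K_1$ equals $6 + 4\sqrt{2}$, and $K_2 \vee 8K_1$ contains no spanning tree with leaf degree at most $3$. -/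
section Aux

open SimpleGraph Matrix Finset

abbrev V10 := Fin 2 ⊕ Fin 8

abbrev GG : SimpleGraph V10 := (⊤ : SimpleGraph (Fin 2)).graphJoin (⊥ : SimpleGraph (Fin 8))

lemma GG_adj_ll (a b : Fin 2) : GG.Adj (.inl a) (.inl b) ↔ a ≠ b := Iff.rfl
lemma GG_adj_lr (a : Fin 2) (b : Fin 8) : GG.Adj (.inl a) (.inr b) := trivial
lemma GG_adj_rl (b : Fin 8) (a : Fin 2) : GG.Adj (.inr b) (.inl a) := trivial
lemma GG_adj_rr (a b : Fin 8) : ¬ GG.Adj (.inr a) (.inr b) := fun h => h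

lemma mem_spec_iff (μ : ℝ) {V : Type*} [Fintype V] [DecidableEq V] (M : Matrix V V ℝ) :
    μ ∈ spectrum ℝ M ↔ ∃ v, v ≠ 0 ∧ M *ᵥ v = μ • v := by
  rw [spectrum.mem_iff, Matrix.isUnit_iff_isUnit_det, isUnit_iff_ne_zero, not_not,
    ← Matrix.exists_mulVec_eq_zero_iff]
  have key : ∀ v : V → ℝ, (algebraMap ℝ (Matrix V V ℝ) μ - M) *ᵥ v = μ • v - M *ᵥ v := by
    intro v
    rw [Matrix.sub_mulVec]
    congr 1
    ext i
    simp [Matrix.algebraMap_eq_diagonal, mulVec_diagonal]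
  constructor
  · rintro ⟨v, hv, h⟩
    rw [key] at h
    exact ⟨v, hv, (sub_eq_zero.mp h).symm⟩
  · rintro ⟨v, hv, h⟩
    exact ⟨v, hv, by rw [key, h, sub_self]⟩

lemma Q_row_inl (v : V10 → ℝ) (a : Fin 2) :
    (signlessLap GG *ᵥ v) (Sum.inl a)
      = 9 * v (Sum.inl a) + ((∑ x : V10, v x) - v (Sum.inl a)) := by
  letI : DecidableRel GG.Adj := Classical.decRel _
  have hnf : GG.neighborFinset (Sum.inl a) = Finset.univ.erase (Sum.inl a) := by
    ext x
    cases x with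
    | inl b =>
      simp only [SimpleGraph.mem_neighborFinset, GG_adj_ll, Finset.mem_erase,
        Finset.mem_univ, and_true, ne_eq, Sum.inl.injEq]
      exact ⟨fun h h2 => h h2.symm, fun h h2 => h h2.symm⟩
    | inr b =>
      simp [SimpleGraph.mem_neighborFinset, GG_adj_lr a b]
  have hdeg : GG.degree (Sum.inl a) = 9 := by
    rw [← SimpleGraph.card_neighborFinset_eq_degree, hnf,
      Finset.card_erase_of_mem (Finset.mem_univ _)]
    simp
  show ((GG.degMatrix ℝ + GG.adjMatrix ℝ) *ᵥ v) (Sum.inl a) = _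
  rw [Matrix.add_mulVec, Pi.add_apply, SimpleGraph.degMatrix_mulVec_apply,
    SimpleGraph.adjMatrix_mulVec_apply, hdeg, hnf,
    Finset.sum_erase_eq_sub (Finset.mem_univ _)]
  push_cast
  ring

lemma Q_row_inr (v : V10 → ℝ) (j : Fin 8) :
    (signlessLap GG *ᵥ v) (Sum.inr j)
      = 2 * v (Sum.inr j) + (v (Sum.inl 0) + v (Sum.inl 1)) := by
  letI : DecidableRel GG.Adj := Classical.decRel _
  have hnf : GG.neighborFinset (Sum.inr j) = {Sum.inl 0, Sum.inl 1} := by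
    ext x
    cases x with
    | inl b =>
      simp only [SimpleGraph.mem_neighborFinset, Finset.mem_insert, Finset.mem_singleton,
        Sum.inl.injEq]
      constructor
      · intro _; omega
      · intro _; exact GG_adj_rl j b
    | inr b =>
      simp only [SimpleGraph.mem_neighborFinset, Finset.mem_insert, Finset.mem_singleton]
      constructor
      · exact fun h => absurd h (GG_adj_rr j b)
      · rintro (h | h) <;> exact absurd h (by simp)
  have hdeg : GG.degree (Sum.inr j) = 2 := by
    rw [← SimpleGraph.card_neighborFinset_eq_degree, hnf]
    decide
  show ((GG.degMatrix ℝ + GG.adjMatrix ℝ) *ᵥ v) (Sum.inr j) = _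
  rw [Matrix.add_mulVec, Pi.add_apply, SimpleGraph.degMatrix_mulVec_apply,
    SimpleGraph.adjMatrix_mulVec_apply, hdeg, hnf,
    Finset.sum_pair (by simp : (Sum.inl 0 : V10) ≠ Sum.inl 1)]
  push_cast
  ring

lemma sum_V10 (v : V10 → ℝ) :
    (∑ x : V10, v x) = v (Sum.inl 0) + v (Sum.inl 1) + ∑ j : Fin 8, v (Sum.inr j) := by
  rw [Fintype.sum_sum_type, Fin.sum_univ_two]

end Aux

/-- `q(K₂ ∨ 8K₁) = 6 + 4 * Real.sqrt 2` and `K₂ ∨ 8K₁` has no spanning tree with leaf degree at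
most 3. -/
theorem qRadius_K2_join_8K1 :
    qRadius ((⊤ : SimpleGraph (Fin 2)).graphJoin (⊥ : SimpleGraph (Fin 8))) = 6 + 4 * Real.sqrt 2 ∧
      ¬ HasSpanningTreeWithLeafDegLE ((⊤ : SimpleGraph (Fin 2)).graphJoin (⊥ : SimpleGraph (Fin 8))) 3 := by
  open SimpleGraph Matrix in
  set s2 := Real.sqrt 2 with hs2def
  have hs2 : s2 ^ 2 = 2 := Real.sq_sqrt (by norm_num)
  have hs2nn : (0:ℝ) ≤ s2 := Real.sqrt_nonneg 2
  have hs2gt : (1.4:ℝ) ≤ s2 := by nlinarith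
  constructor
  · -- spectral radius computation
    have hmem : (6 + 4 * s2) ∈ spectrum ℝ (signlessLap GG) := by
      rw [mem_spec_iff]
      refine ⟨Sum.elim (fun _ => 4 + 4 * s2) (fun _ => 2), ?_, ?_⟩
      · intro h
        have h0 := congrFun h (Sum.inl 0)
        simp only [Sum.elim_inl, Pi.zero_apply] at h0
        nlinarith
      · funext x
        cases x with
        | inl a =>
          rw [Q_row_inl, sum_V10]
          simp only [Sum.elim_inl, Sum.elim_inr, Pi.smul_apply, smul_eq_mul,
            Finset.sum_const, Finset.card_univ, Fintype.card_fin, nsmul_eq_mul]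
          push_cast
          linear_combination (-16 : ℝ) * hs2
        | inr j =>
          rw [Q_row_inr]
          simp only [Sum.elim_inl, Sum.elim_inr, Pi.smul_apply, smul_eq_mul]
          ring
    have hub : ∀ μ ∈ spectrum ℝ (signlessLap GG), μ ≤ 6 + 4 * s2 := by
      intro μ hμ
      by_contra hgt
      push_neg at hgt
      obtain ⟨v, hv, hQ⟩ := (mem_spec_iff μ _).mp hμ
      set a := v (Sum.inl 0) with ha_def
      set b := v (Sum.inl 1) with hb_def
      set S := ∑ j : Fin 8, v (Sum.inr j) with hS_def
      have row0 : 9 * a + (a + b + S - a) = μ * a := by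
        have := congrFun hQ (Sum.inl 0)
        rwa [Q_row_inl, sum_V10, Pi.smul_apply, smul_eq_mul] at this
      have row1 : 9 * b + (a + b + S - b) = μ * b := by
        have := congrFun hQ (Sum.inl 1)
        rwa [Q_row_inl, sum_V10, Pi.smul_apply, smul_eq_mul] at this
      have rowr : ∀ j : Fin 8, 2 * v (Sum.inr j) + (a + b) = μ * v (Sum.inr j) := by
        intro j
        have := congrFun hQ (Sum.inr j)
        rwa [Q_row_inr, Pi.smul_apply, smul_eq_mul] at this
      have hμ8 : (8:ℝ) < μ := by nlinarith
      have hab : a = b := by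
        have key : (8 - μ) * (a - b) = 0 := by linear_combination row0 - row1
        rcases mul_eq_zero.mp key with h | h
        · nlinarith
        · linarith
      have hμ2 : (0:ℝ) < μ - 2 := by nlinarith
      have hy : ∀ j : Fin 8, v (Sum.inr j) = 2 * a / (μ - 2) := by
        intro j
        have := rowr j
        field_simp
        linarith [this, hab]
      have hSval : S = 16 * a / (μ - 2) := by
        rw [hS_def]
        rw [Finset.sum_congr rfl (fun j _ => hy j)]
        simp only [Finset.sum_const, Finset.card_univ, Fintype.card_fin, nsmul_eq_mul]
        ring
      have hquad : (0:ℝ) < μ ^ 2 - 12 * μ + 4 := by nlinarith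
      have ha : a = 0 := by
        have key : a * (μ ^ 2 - 12 * μ + 4) = 0 := by
          have h10 : 10 * a + S = μ * a := by linarith [row0, hab]
          rw [hSval] at h10
          field_simp at h10
          linear_combination -h10
        rcases mul_eq_zero.mp key with h | h
        · exact h
        · linarith
      apply hv
      funext x
      cases x with
      | inl i =>
        have h0 : v (Sum.inl 0) = 0 := ha
        have h1 : v (Sum.inl 1) = 0 := by rw [← hb_def, ← hab]; exact ha
        fin_cases i
        · simpa using h0
        · simpa using h1
      | inr j =>
        rw [hy j, ha]
        simp
    show sSup (spectrum ℝ (signlessLap GG)) = 6 + 4 * s2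
    exact IsGreatest.csSup_eq ⟨hmem, hub⟩
  · rintro ⟨T, hTG, hTree, hleaf⟩
    have hnbr : ∀ j : Fin 8, ∃ i : Fin 2, T.Adj (Sum.inl i) (Sum.inr j) := by
      intro j
      obtain ⟨w⟩ := hTree.isConnected.preconnected (Sum.inr j) (Sum.inl 0)
      cases w with
      | cons h p =>
        rename_i x
        cases x with
        | inl i => exact ⟨i, h.symm⟩
        | inr k => exact absurd (hTG h) (GG_adj_rr j k)
    have huniq : ∀ j k : Fin 8, T.Adj (Sum.inl 0) (Sum.inr j) → T.Adj (Sum.inl 1) (Sum.inr j) →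
        T.Adj (Sum.inl 0) (Sum.inr k) → T.Adj (Sum.inl 1) (Sum.inr k) → j = k := by
      intro j k h0j h1j h0k h1k
      by_contra hne
      have hp1 : (SimpleGraph.Walk.cons h0j (SimpleGraph.Walk.cons h1j.symm
          SimpleGraph.Walk.nil)).IsPath := by
        simp [SimpleGraph.Walk.isPath_def]
      have hp2 : (SimpleGraph.Walk.cons h0k (SimpleGraph.Walk.cons h1k.symm
          SimpleGraph.Walk.nil)).IsPath := by
        simp [SimpleGraph.Walk.isPath_def]
      have := hTree.IsAcyclic.path_unique ⟨_, hp1⟩ ⟨_, hp2⟩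
      have hsup := congrArg (fun p : T.Path (Sum.inl 0) (Sum.inl 1) => p.1.support) this
      simp only [SimpleGraph.Walk.support_cons, SimpleGraph.Walk.support_nil] at hsup
      apply hne
      have := List.cons.injEq .. ▸ hsup
      simpa using hsup
    have hleafchar : ∀ (j : Fin 8) (i : Fin 2), T.Adj (Sum.inl i) (Sum.inr j) →
        ¬ (T.Adj (Sum.inl 0) (Sum.inr j) ∧ T.Adj (Sum.inl 1) (Sum.inr j)) →
        (T.neighborSet (Sum.inr j)).ncard = 1 := by
      intro j i hi hnb
      have hsub : T.neighborSet (Sum.inr j) = {Sum.inl i} := by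
        ext x
        simp only [SimpleGraph.mem_neighborSet, Set.mem_singleton_iff]
        constructor
        · intro hx
          cases x with
          | inr k => exact absurd (hTG hx) (GG_adj_rr j k)
          | inl i' =>
            by_contra hne
            have hne' : i' ≠ i := fun h => hne (by rw [h])
            apply hnb
            fin_cases i <;> fin_cases i' <;>
              first
                | exact absurd rfl hne'
                | exact ⟨hx.symm, hi⟩
                | exact ⟨hi, hx.symm⟩
        · rintro rfl
          exact hi.symm
      rw [hsub]
      exact Set.ncard_singleton _
    set B : Set (Fin 8) :=
      {j | T.Adj (Sum.inl 0) (Sum.inr j) ∧ T.Adj (Sum.inl 1) (Sum.inr j)} with hB_def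
    set L : Fin 2 → Set (Fin 8) := fun i =>
      {j | T.Adj (Sum.inl i) (Sum.inr j) ∧ (T.neighborSet (Sum.inr j)).ncard = 1} with hL_def
    have hBsub : B.Subsingleton := fun j hj k hk => huniq j k hj.1 hj.2 hk.1 hk.2
    have hBcard : B.ncard ≤ 1 := by
      rcases hBsub.eq_empty_or_singleton with h | ⟨x, h⟩ <;> simp [h]
    have hLcard : ∀ i, (L i).ncard ≤ 3 := by
      intro i
      have himg : Sum.inr '' (L i) ⊆
          {u : V10 | T.Adj (Sum.inl i) u ∧ (T.neighborSet u).ncard = 1} := by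
        rintro _ ⟨j, hj, rfl⟩
        exact hj
      calc (L i).ncard = (Sum.inr '' (L i)).ncard :=
            (Set.ncard_image_of_injective _ Sum.inr_injective).symm
        _ ≤ _ := Set.ncard_le_ncard himg (Set.toFinite _)
        _ ≤ 3 := hleaf (Sum.inl i)
    have hcover : (Set.univ : Set (Fin 8)) ⊆ L 0 ∪ L 1 ∪ B := by
      intro j _
      by_cases hB : j ∈ B
      · exact Or.inr hB
      · obtain ⟨i, hi⟩ := hnbr j
        have hl := hleafchar j i hi hB
        fin_cases i
        · exact Or.inl (Or.inl ⟨hi, hl⟩)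
        · exact Or.inl (Or.inr ⟨hi, hl⟩)
    have hle : (8 : ℕ) ≤ 7 := by
      calc (8:ℕ) = (Set.univ : Set (Fin 8)).ncard := by
            rw [Set.ncard_univ]; simp
        _ ≤ (L 0 ∪ L 1 ∪ B).ncard := Set.ncard_le_ncard hcover (Set.toFinite _)
        _ ≤ (L 0 ∪ L 1).ncard + B.ncard := Set.ncard_union_le _ _
        _ ≤ (L 0).ncard + (L 1).ncard + B.ncard := by
            have := Set.ncard_union_le (L 0) (L 1)
            omega
        _ ≤ 3 + 3 + 1 := by
            have h0 := hLcard 0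
            have h1 := hLcard 1
            omega
    omega
end
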